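/- Let ρ ∈ (0,1] and μ > 0, and let F be the symmetric Kopel map. If μ ≥ 3, then the set of fixed points of F is exactly {(0,0), (1−1/μ, 1−1/μ), ((μ+1+d)/(2μ), (μ+1−d)/(2μ)), ((μ+1−d)/(2μ), (μ+1+d)/(2μ))} where d = √((μ+1)(μ−3)); if 0 < μ < 3, then the set of fixed points of F is exactly {(0,0), (1−1/μ, 1−1/μ)}. -/

import Mathlib

/-- Fixed points of the symmetric Kopel map: for `μ ≥ 3` there are exactly four,
and for `0 < μ < 3` exactly two. -/
theorem symmetric_kopel_fixed_points (ρ μ : ℝ)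
    (hρ : ρ ∈ Set.Ioc (0 : ℝ) 1) (hμ : 0 < μ)
    (F : ℝ × ℝ → ℝ × ℝ)
    (hF : ∀ p : ℝ × ℝ, F p =
      ((1 - ρ) * p.1 + ρ * μ * p.2 * (1 - p.2),
       (1 - ρ) * p.2 + ρ * μ * p.1 * (1 - p.1))) :
    (3 ≤ μ → {p : ℝ × ℝ | F p = p} =
      {((0 : ℝ), (0 : ℝ)), (1 - 1 / μ, 1 - 1 / μ),
        ((μ + 1 + Real.sqrt ((μ + 1) * (μ - 3))) / (2 * μ),
         (μ + 1 - Real.sqrt ((μ + 1) * (μ - 3))) / (2 * μ)),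
        ((μ + 1 - Real.sqrt ((μ + 1) * (μ - 3))) / (2 * μ),
         (μ + 1 + Real.sqrt ((μ + 1) * (μ - 3))) / (2 * μ))}) ∧
    (μ < 3 → {p : ℝ × ℝ | F p = p} =
      {((0 : ℝ), (0 : ℝ)), (1 - 1 / μ, 1 - 1 / μ)}) := by
  obtain ⟨hρ0, hρ1⟩ := hρ
  have hμ' : μ ≠ 0 := ne_of_gt hμ
  have hρ' : ρ ≠ 0 := ne_of_gt hρ0
  have key : ∀ p : ℝ × ℝ, F p = p ↔
      (p.1 = μ * p.2 * (1 - p.2) ∧ p.2 = μ * p.1 * (1 - p.1)) := by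
    intro p
    rw [hF, Prod.ext_iff]
    constructor
    · rintro ⟨h1, h2⟩
      constructor
      · have e : ρ * (μ * p.2 * (1 - p.2) - p.1) = 0 := by linear_combination h1
        rcases mul_eq_zero.mp e with h | h
        · exact absurd h hρ'
        · linarith
      · have e : ρ * (μ * p.1 * (1 - p.1) - p.2) = 0 := by linear_combination h2
        rcases mul_eq_zero.mp e with h | h
        · exact absurd h hρ'
        · linarith
    · rintro ⟨h1, h2⟩
      constructor
      · linear_combination (-ρ) * h1
      · linear_combination (-ρ) * h2
  constructor
  · intro hμ3
    set d := Real.sqrt ((μ + 1) * (μ - 3)) with hd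
    have hd0 : 0 ≤ d := Real.sqrt_nonneg _
    have hd2 : d ^ 2 = (μ + 1) * (μ - 3) := by
      rw [hd, sq]
      exact Real.mul_self_sqrt (by nlinarith)
    ext ⟨x, y⟩
    simp only [Set.mem_setOf_eq, key, Set.mem_insert_iff, Set.mem_singleton_iff,
      Prod.mk.injEq]
    constructor
    · rintro ⟨h1, h2⟩
      have hfac : (x - y) * (1 + μ - μ * (x + y)) = 0 := by linear_combination h1 - h2
      rcases mul_eq_zero.mp hfac with hxy | hsum
      · have hq : x * (μ * x - (μ - 1)) = 0 := by linear_combination h2 + hxy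
        rcases mul_eq_zero.mp hq with h | h
        · exact Or.inl ⟨h, by linarith⟩
        · refine Or.inr (Or.inl ⟨?_, ?_⟩)
          · field_simp
            linear_combination h
          · field_simp
            linear_combination h - μ * hxy
      · have hs : μ * (x + y) = μ + 1 := by linarith
        have hp : μ ^ 2 * (x * y) = μ + 1 := by
          linear_combination (μ * (x + y) + 2) / 2 * hs - (μ / 2) * h1 - (μ / 2) * h2
        have hquad : (2 * μ * x - (μ + 1)) ^ 2 = (μ + 1) * (μ - 3) := by
          linear_combination (4 * μ * x) * hs - 4 * hp
        have hfac2 : (2 * μ * x - (μ + 1) - d) * (2 * μ * x - (μ + 1) + d) = 0 := by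
          linear_combination hquad - hd2
        rcases mul_eq_zero.mp hfac2 with h | h
        · refine Or.inr (Or.inr (Or.inl ⟨?_, ?_⟩))
          · field_simp
            linarith
          · field_simp
            nlinarith [hs, h]
        · refine Or.inr (Or.inr (Or.inr ⟨?_, ?_⟩))
          · field_simp
            linarith
          · field_simp
            nlinarith [hs, h]
    · rintro (⟨hx, hy⟩ | ⟨hx, hy⟩ | ⟨hx, hy⟩ | ⟨hx, hy⟩) <;> subst hx <;> subst hy
      · constructor <;> ring
      · constructor <;> (field_simp; try ring)
      · constructor <;> (field_simp; linear_combination hd2)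
      · constructor <;> (field_simp; linear_combination hd2)
  · intro hμ3
    ext ⟨x, y⟩
    simp only [Set.mem_setOf_eq, key, Set.mem_insert_iff, Set.mem_singleton_iff,
      Prod.mk.injEq]
    constructor
    · rintro ⟨h1, h2⟩
      have hfac : (x - y) * (1 + μ - μ * (x + y)) = 0 := by linear_combination h1 - h2
      rcases mul_eq_zero.mp hfac with hxy | hsum
      · have hq : x * (μ * x - (μ - 1)) = 0 := by linear_combination h2 + hxy
        rcases mul_eq_zero.mp hq with h | h
        · exact Or.inl ⟨h, by linarith⟩
        · refine Or.inr ⟨?_, ?_⟩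
          · field_simp
            linear_combination h
          · field_simp
            linear_combination h - μ * hxy
      · exfalso
        have hs : μ * (x + y) = μ + 1 := by linarith
        have hp : μ ^ 2 * (x * y) = μ + 1 := by
          linear_combination (μ * (x + y) + 2) / 2 * hs - (μ / 2) * h1 - (μ / 2) * h2
        have hquad : (2 * μ * x - (μ + 1)) ^ 2 = (μ + 1) * (μ - 3) := by
          linear_combination (4 * μ * x) * hs - 4 * hp
        nlinarith [sq_nonneg (2 * μ * x - (μ + 1))]
    · rintro (⟨hx, hy⟩ | ⟨hx, hy⟩) <;> subst hx <;> subst hy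
      · constructor <;> ring
      · constructor <;> (field_simp; try ring)
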